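/- Let α ∈ [0,1] be a real number and let n = pq, where p < q are primes. Then for the power graph P(ℤ_n) of the cyclic group of order n: (i) αn − 1 is an eigenvalue of A_α(P(ℤ_n)) whose eigenspace has dimension at least φ(n); (ii) α(φ(n) + φ(p) + 1) − 1 is an eigenvalue whose eigenspace has dimension at least φ(p) − 1; (iii) α(φ(n) + φ(q) + 1) − 1 is an eigenvalue whose eigenspace has dimension at least φ(q) − 1. Here φ is Euler's totient function. -/

import Mathlib

open Matrix Polynomial BigOperators

/-- The generalized adjacency matrix `A_α(G) = α·D(G) + (1−α)·A(G)`. -/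
noncomputable def Aalpha {V : Type*} [Fintype V] (G : SimpleGraph V) (α : ℝ) :
    Matrix V V ℝ :=
  letI := Classical.decEq V
  letI := Classical.decRel G.Adj
  α • Matrix.diagonal (fun v => (G.degree v : ℝ)) + (1 - α) • G.adjMatrix ℝ

/-- `μ` is an eigenvalue of the real matrix `M`. -/
def Matrix.IsEigenvalue {n : Type*} [Fintype n] (M : Matrix n n ℝ) (μ : ℝ) : Prop :=
  ∃ v : n → ℝ, v ≠ 0 ∧ M.mulVec v = μ • v

/-- The dimension of the eigenspace of a real matrix `M` for the value `μ`. -/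
noncomputable def eigMult {n : Type*} [Fintype n] (M : Matrix n n ℝ) (μ : ℝ) : ℕ :=
  letI := Classical.decEq n
  Module.finrank ℝ (Module.End.eigenspace (Matrix.toLin' M) μ)

/-- The joined union `G[G_1, …, G_n]`. -/
def joinedUnion {n : ℕ} (G : SimpleGraph (Fin n)) (V : Fin n → Type*)
    (Gs : ∀ i, SimpleGraph (V i)) : SimpleGraph (Σ i, V i) :=
  SimpleGraph.fromRel (fun x y =>
    if h : x.1 = y.1 then (Gs y.1).Adj (h ▸ x.2) y.2 else G.Adj x.1 y.1)

/-- The join `G ∇ H` of two graphs. -/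
def graphJoin {V W : Type*} (G : SimpleGraph V) (H : SimpleGraph W) :
    SimpleGraph (V ⊕ W) :=
  SimpleGraph.fromRel (fun x y =>
    match x, y with
    | Sum.inl a, Sum.inl b => G.Adj a b
    | Sum.inr a, Sum.inr b => H.Adj a b
    | _, _ => True)

/-- The disjoint union `G ∪ H` of two graphs. -/
def disjUnion {V W : Type*} (G : SimpleGraph V) (H : SimpleGraph W) :
    SimpleGraph (V ⊕ W) :=
  SimpleGraph.fromRel (fun x y =>
    match x, y with
    | Sum.inl a, Sum.inl b => G.Adj a b
    | Sum.inr a, Sum.inr b => H.Adj a b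
    | _, _ => False)

/-- Degree of a vertex (classical version). -/
noncomputable def gdegree {V : Type*} [Fintype V] (G : SimpleGraph V) (v : V) : ℕ :=
  letI := Classical.decEq V
  letI := Classical.decRel G.Adj
  G.degree v

/-- The power graph of a group. -/
def powerGraph (G : Type*) [Group G] : SimpleGraph G :=
  SimpleGraph.fromRel (fun x y => ∃ k : ℕ, 0 < k ∧ y = x ^ k)


open Matrix BigOperators Finset

section groupstuff
variable {G : Type*} [Group G] [Fintype G]

lemma pg_exists_pos_pow_iff (x y : G) :
    (∃ k : ℕ, 0 < k ∧ y = x ^ k) ↔ y ∈ Subgroup.zpowers x := by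
  constructor
  · rintro ⟨k, -, rfl⟩
    exact Subgroup.mem_zpowers_iff.mpr ⟨k, by simp⟩
  · intro h
    obtain ⟨k, hk⟩ := mem_powers_iff_mem_zpowers.mpr h
    rcases Nat.eq_zero_or_pos k with rfl | hk0
    · exact ⟨orderOf x, orderOf_pos x, by simp [← hk, pow_orderOf_eq_one]⟩
    · exact ⟨k, hk0, hk.symm⟩

lemma pg_mem_zpowers_iff_dvd [IsCyclic G] (x y : G) :
    y ∈ Subgroup.zpowers x ↔ orderOf y ∣ orderOf x := by
  classical
  constructor
  · intro h
    obtain ⟨k, hk⟩ := mem_powers_iff_mem_zpowers.mpr h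
    rw [← hk]
    exact orderOf_pow_dvd k
  · intro hdvd
    set T : Finset G := Finset.univ.filter (· ∈ Subgroup.zpowers x) with hT
    set S : Finset G := Finset.univ.filter (fun a => a ^ orderOf x = 1) with hS
    have hTS : T ⊆ S := by
      intro a ha
      rw [hT, Finset.mem_filter] at ha
      rw [hS, Finset.mem_filter]
      obtain ⟨k, hk⟩ := mem_powers_iff_mem_zpowers.mpr ha.2
      refine ⟨Finset.mem_univ _, ?_⟩
      rw [← orderOf_dvd_iff_pow_eq_one, ← hk]
      exact orderOf_pow_dvd k
    have hTcard : T.card = orderOf x := by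
      rw [hT, ← Fintype.card_subtype, ← Fintype.card_zpowers (x := x)]
    have hScard : S.card ≤ orderOf x := by
      exact IsCyclic.card_pow_eq_one_le (α := G) (n := orderOf x) (orderOf_pos x)
    have hTeqS : T = S := Finset.eq_of_subset_of_card_le hTS (by omega)
    have hyS : y ∈ S := by
      rw [hS, Finset.mem_filter]
      exact ⟨Finset.mem_univ _, orderOf_dvd_iff_pow_eq_one.mp hdvd⟩
    rw [← hTeqS, hT, Finset.mem_filter] at hyS
    exact hyS.2

lemma powerGraph_adj_iff [IsCyclic G] (x y : G) :
    (powerGraph G).Adj x y ↔ x ≠ y ∧ (orderOf y ∣ orderOf x ∨ orderOf x ∣ orderOf y) := by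
  rw [powerGraph, SimpleGraph.fromRel_adj]
  simp only [pg_exists_pos_pow_iff, pg_mem_zpowers_iff_dvd]

end groupstuff

section matrixstuff
variable {V : Type*} [Fintype V] [DecidableEq V]

lemma Aalpha_twin (G : SimpleGraph V) (α : ℝ) {x y : V} {d : ℕ}
    (hadj : G.Adj x y) (hdx : gdegree G x = d) (hdy : gdegree G y = d)
    (htwin : ∀ w, w ≠ x → w ≠ y → (G.Adj w x ↔ G.Adj w y)) :
    (Aalpha G α).mulVec (Pi.single x 1 - Pi.single y 1)
      = (α * ((d : ℝ) + 1) - 1) • (Pi.single x 1 - Pi.single y 1) := by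
  classical
  have hxy : x ≠ y := hadj.ne
  have hA : ∀ u v : V, Aalpha G α u v
      = α * (if u = v then (gdegree G u : ℝ) else 0)
        + (1 - α) * (if G.Adj u v then 1 else 0) := by
    intro u v
    unfold Aalpha gdegree
    simp [Matrix.add_apply, Matrix.smul_apply, Matrix.diagonal_apply,
      SimpleGraph.adjMatrix_apply, smul_eq_mul]
  funext w
  rw [Matrix.mulVec_sub]
  simp only [Matrix.mulVec_single, Pi.sub_apply, Pi.smul_apply, smul_eq_mul, mul_one,
    Matrix.col_apply, op_smul_eq_mul]
  rw [hA w x, hA w y]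
  by_cases hwx : w = x
  · subst hwx
    simp [hxy, G.irrefl, hadj, hdx, Pi.single_apply, Ne.symm hxy]
    ring
  · by_cases hwy : w = y
    · subst hwy
      simp [Ne.symm hxy, G.irrefl, hadj.symm, hdy, Pi.single_apply, hxy]
      ring
    · have h1 : G.Adj w x ↔ G.Adj w y := htwin w hwx hwy
      simp [hwx, hwy, Pi.single_apply]
      by_cases h2 : G.Adj w x
      · simp [h2, h1.mp h2]
      · have h3 : ¬ G.Adj w y := fun h => h2 (h1.mpr h)
        simp [h2, h3]

lemma le_eigMult_of_family (M : Matrix V V ℝ) (μ : ℝ) {k : ℕ}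
    (x0 : V) (s : Fin k → V) (hs : Function.Injective s) (hx0 : ∀ i, s i ≠ x0)
    (h : ∀ i, M.mulVec (Pi.single x0 1 - Pi.single (s i) 1)
        = μ • (Pi.single x0 1 - Pi.single (s i) 1)) :
    k ≤ eigMult M μ := by
  classical
  unfold eigMult
  set E := Module.End.eigenspace (Matrix.toLin' M) μ with hE
  have hmem : ∀ i, (Pi.single x0 1 - Pi.single (s i) 1 : V → ℝ) ∈ E := by
    intro i
    rw [hE, Module.End.mem_eigenspace_iff, Matrix.toLin'_apply, h i]
  have hli0 : LinearIndependent ℝ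
      (fun i : Fin k => (Pi.single x0 1 - Pi.single (s i) 1 : V → ℝ)) := by
    rw [Fintype.linearIndependent_iff]
    intro g hg j
    have h2 := congrFun hg (s j)
    simp only [Finset.sum_apply, Pi.smul_apply, Pi.sub_apply, Pi.single_apply,
      Pi.zero_apply, smul_eq_mul, hs.eq_iff] at h2
    simp only [hx0 j, if_false, zero_sub, mul_neg, mul_ite, mul_one, mul_zero,
      Finset.sum_neg_distrib, Finset.sum_ite_eq, Finset.mem_univ, if_true] at h2
    exact neg_eq_zero.mp h2
  have hli : LinearIndependent ℝ
      (fun i : Fin k => (⟨_, hmem i⟩ : E)) :=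
    LinearIndependent.of_comp E.subtype hli0
  have hfin := hli.fintype_card_le_finrank
  rw [Fintype.card_fin] at hfin
  convert hfin

end matrixstuff

lemma gdegree_eq_ncard {V : Type*} [Fintype V] (G : SimpleGraph V) (v : V) :
    gdegree G v = ({w | G.Adj v w} : Set V).ncard := by
  classical
  unfold gdegree
  simp [SimpleGraph.degree, SimpleGraph.neighborFinset, Set.ncard_eq_toFinset_card',
    SimpleGraph.neighborSet]
  congr 1; ext; exact Set.mem_toFinset.trans (by simp)

lemma pg_div_helper {p q : ℕ} (hp : p.Prime) (hq : q.Prime) (hne : p ≠ q) {t : ℕ}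
    (ht : t ∣ p * q) : (t ∣ p ∨ p ∣ t) ↔ t ≠ q := by
  constructor
  · rintro (h | h) rfl
    · exact hne ((Nat.prime_dvd_prime_iff_eq hq hp).mp h).symm
    · exact hne ((Nat.prime_dvd_prime_iff_eq hp hq).mp h)
  · intro htq
    by_cases hpt : p ∣ t
    · exact Or.inr hpt
    · left
      have hco : Nat.Coprime t p := ((Nat.Prime.coprime_iff_not_dvd hp).mpr hpt).symm
      have h2 : t ∣ q := (Nat.Coprime.dvd_mul_left hco).mp ht
      rcases (Nat.Prime.eq_one_or_self_of_dvd hq t h2) with rfl | rfl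
      · exact one_dvd p
      · exact absurd rfl htq

set_option maxHeartbeats 1000000 in
theorem pg_main {α : ℝ} (M : Type*) [Group M] [Fintype M] [DecidableEq M] [IsCyclic M]
    (p q n : ℕ) (hp : p.Prime) (hq : q.Prime) (hpq : p < q) (hn : n = p * q)
    (hcard : Fintype.card M = n) :
    Nat.totient n ≤
      eigMult (Aalpha (powerGraph M) α) (α * (n : ℝ) - 1) ∧
    Nat.totient p - 1 ≤
      eigMult (Aalpha (powerGraph M) α)
        (α * ((Nat.totient n : ℝ) + (Nat.totient p : ℝ) + 1) - 1) ∧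
    Nat.totient q - 1 ≤
      eigMult (Aalpha (powerGraph M) α)
        (α * ((Nat.totient n : ℝ) + (Nat.totient q : ℝ) + 1) - 1) := by
  classical
  set G := powerGraph M with hG
  have hp1 : 1 < p := hp.one_lt
  have hq1 : 1 < q := hq.one_lt
  have hn1 : 1 < n := by
    rw [hn]; calc 1 < p := hp1
    _ ≤ p * q := Nat.le_mul_of_pos_right _ hq.pos
  have hpq' : p ≠ q := hpq.ne
  have hco : Nat.Coprime p q := (Nat.coprime_primes hp hq).mpr hpq'
  have hpn : p ∣ n := hn ▸ Dvd.intro q rfl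
  have hqn : q ∣ n := hn ▸ Dvd.intro_left p rfl
  -- arithmetic key
  obtain ⟨P, hP⟩ : ∃ P, p = P + 1 := ⟨p - 1, (Nat.succ_pred_eq_of_pos hp.pos).symm⟩
  obtain ⟨Q, hQ⟩ : ∃ Q, q = Q + 1 := ⟨q - 1, (Nat.succ_pred_eq_of_pos hq.pos).symm⟩
  have hφp : Nat.totient p = P := by rw [Nat.totient_prime hp, hP]; simp
  have hφq : Nat.totient q = Q := by rw [Nat.totient_prime hq, hQ]; simp
  have hφn : Nat.totient n = P * Q := by
    rw [hn, Nat.totient_mul hco, hφp, hφq]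
  have key : Nat.totient n + Nat.totient p + Nat.totient q + 1 = n := by
    rw [hφn, hφp, hφq, hn, hP, hQ]; ring
  -- counting elements of given order
  have hOrd : ∀ d : ℕ, d ∣ n →
      (Finset.univ.filter (fun a : M => orderOf a = d)).card = Nat.totient d := by
    intro d hd
    have := IsCyclic.card_orderOf_eq_totient (α := M) (d := d) (by rwa [hcard])
    exact this
  have hdvdn : ∀ x : M, orderOf x ∣ n := fun x => by rw [← hcard]; exact orderOf_dvd_card
  have hadj : ∀ x y : M, G.Adj x y ↔
      x ≠ y ∧ (orderOf y ∣ orderOf x ∨ orderOf x ∣ orderOf y) :=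
    fun x y => powerGraph_adj_iff x y
  -- degrees of dominating vertices
  have hdom : ∀ x : M, (orderOf x = 1 ∨ orderOf x = n) → gdegree G x = n - 1 := by
    intro x hx
    rw [gdegree_eq_ncard]
    have hset : {w | G.Adj x w} = ({x}ᶜ : Set M) := by
      ext w
      simp only [Set.mem_setOf_eq, Set.mem_compl_iff, Set.mem_singleton_iff]
      rw [hadj]
      constructor
      · rintro ⟨h, -⟩ h2; exact h h2.symm
      · intro hne
        refine ⟨fun h => hne h.symm, ?_⟩
        rcases hx with h1 | h1
        · right; rw [h1]; exact one_dvd _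
        · left; rw [h1]; exact hdvdn w
    rw [hset]
    have h1 := Set.ncard_add_ncard_compl ({x} : Set M)
    rw [Set.ncard_singleton, Nat.card_eq_fintype_card, hcard] at h1
    omega
  -- degrees of order-p and order-q vertices
  have hdegen : ∀ a b : ℕ, a.Prime → b.Prime → a ≠ b → n = a * b →
      ∀ x : M, orderOf x = a → gdegree G x = n - Nat.totient b - 1 := by
    intro a b hpa hpb hab hnab x hx
    rw [gdegree_eq_ncard]
    have hset : {w | G.Adj x w} = {w : M | orderOf w ≠ b} \ {x} := by
      ext w
      simp only [Set.mem_setOf_eq, Set.mem_diff, Set.mem_singleton_iff]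
      rw [hadj, hx]
      constructor
      · rintro ⟨hne, hor⟩
        exact ⟨(pg_div_helper hpa hpb hab (hnab ▸ hdvdn w)).mp hor, fun h => hne h.symm⟩
      · rintro ⟨hb, hw⟩
        exact ⟨fun h => hw h.symm, (pg_div_helper hpa hpb hab (hnab ▸ hdvdn w)).mpr hb⟩
    rw [hset]
    have hxmem : x ∈ {w : M | orderOf w ≠ b} := by
      simp only [Set.mem_setOf_eq, hx]; exact hab
    rw [Set.ncard_diff_singleton_of_mem hxmem]
    have hA : ({w : M | orderOf w ≠ b} : Set M).ncard = n - Nat.totient b := by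
      have h1 := Set.ncard_add_ncard_compl ({w : M | orderOf w = b} : Set M)
      have h2 : ({w : M | orderOf w = b} : Set M).ncard = Nat.totient b := by
        rw [Set.ncard_eq_toFinset_card', Set.toFinset_setOf]
        exact hOrd b (by rw [hnab]; exact Dvd.intro_left a rfl)
      have h3 : ({w : M | orderOf w = b} : Set M)ᶜ = {w : M | orderOf w ≠ b} := by
        ext w; simp
      rw [h2, h3, Nat.card_eq_fintype_card, hcard] at h1
      omega
    rw [hA]
  -- the three families
  refine ⟨?_, ?_, ?_⟩
  · -- part (i)
    have hval : α * (n : ℝ) - 1 = α * (((n - 1 : ℕ) : ℝ) + 1) - 1 := by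
      have : ((n - 1 : ℕ) : ℝ) = (n : ℝ) - 1 := by
        push_cast [Nat.cast_sub hn1.le]; ring
      rw [this]; ring_nf
    rw [hval]
    set T : Finset M := Finset.univ.filter (fun a : M => orderOf a = n) with hT
    have hTcard : T.card = Nat.totient n := hOrd n dvd_rfl
    have e := T.equivFinOfCardEq hTcard
    refine le_eigMult_of_family _ _ (1 : M) (fun i => ((e.symm i : T) : M))
      (Subtype.coe_injective.comp e.symm.injective) ?_ ?_
    · intro i
      have hmem := Finset.mem_filter.mp (e.symm i).2
      intro h
      have h' : ((e.symm i : T) : M) = 1 := h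
      rw [h', orderOf_one] at hmem
      omega
    · intro i
      have hmem := Finset.mem_filter.mp (e.symm i).2
      have hordn : orderOf ((e.symm i : T) : M) = n := hmem.2
      have hne : (1 : M) ≠ ((e.symm i : T) : M) := by
        intro h; rw [← h, orderOf_one] at hordn; omega
      refine Aalpha_twin G α ?_ (hdom 1 (Or.inl orderOf_one)) (hdom _ (Or.inr hordn)) ?_
      · rw [hadj]
        exact ⟨hne, Or.inr (by rw [orderOf_one]; exact one_dvd _)⟩
      · intro w hw1 hw2
        rw [hadj, hadj]
        constructor
        · intro _; exact ⟨hw2, Or.inr (by rw [hordn]; exact hdvdn w)⟩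
        · intro _; exact ⟨hw1, Or.inl (by rw [orderOf_one]; exact one_dvd _)⟩
  · -- part (ii)
    have hdegp : ∀ x : M, orderOf x = p → gdegree G x = Nat.totient n + Nat.totient p := by
      intro x hx
      rw [hdegen p q hp hq hpq' hn x hx]; omega
    have hval : α * ((Nat.totient n : ℝ) + (Nat.totient p : ℝ) + 1) - 1
        = α * (((Nat.totient n + Nat.totient p : ℕ) : ℝ) + 1) - 1 := by push_cast; ring
    rw [hval]
    set T : Finset M := Finset.univ.filter (fun a : M => orderOf a = p) with hT
    have hTcard : T.card = Nat.totient p := hOrd p hpn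
    have hTne : T.Nonempty := by
      rw [← Finset.card_pos, hTcard, hφp]; omega
    obtain ⟨x0, hx0⟩ := hTne
    have hordx0 : orderOf x0 = p := (Finset.mem_filter.mp hx0).2
    have hT'card : (T.erase x0).card = Nat.totient p - 1 := by
      rw [Finset.card_erase_of_mem hx0, hTcard]
    have e := (T.erase x0).equivFinOfCardEq hT'card
    refine le_eigMult_of_family _ _ x0 (fun i => ((e.symm i : (T.erase x0)) : M))
      (Subtype.coe_injective.comp e.symm.injective) ?_ ?_
    · intro i
      exact Finset.ne_of_mem_erase (e.symm i).2
    · intro i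
      have hmem := (e.symm i).2
      have hordsi : orderOf ((e.symm i : (T.erase x0)) : M) = p :=
        (Finset.mem_filter.mp (Finset.mem_of_mem_erase hmem)).2
      have hne : x0 ≠ ((e.symm i : (T.erase x0)) : M) :=
        (Finset.ne_of_mem_erase hmem).symm
      refine Aalpha_twin G α ?_ (hdegp x0 hordx0) (hdegp _ hordsi) ?_
      · rw [hadj]
        exact ⟨hne, Or.inl (by rw [hordsi, hordx0])⟩
      · intro w hw1 hw2
        rw [hadj, hadj, hordx0, hordsi]
        exact ⟨fun ⟨_, h⟩ => ⟨hw2, h⟩, fun ⟨_, h⟩ => ⟨hw1, h⟩⟩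
  · -- part (iii)
    have hdegq : ∀ x : M, orderOf x = q → gdegree G x = Nat.totient n + Nat.totient q := by
      intro x hx
      rw [hdegen q p hq hp (Ne.symm hpq') (by rw [hn, mul_comm]) x hx]; omega
    have hval : α * ((Nat.totient n : ℝ) + (Nat.totient q : ℝ) + 1) - 1
        = α * (((Nat.totient n + Nat.totient q : ℕ) : ℝ) + 1) - 1 := by push_cast; ring
    rw [hval]
    set T : Finset M := Finset.univ.filter (fun a : M => orderOf a = q) with hT
    have hTcard : T.card = Nat.totient q := hOrd q hqn
    have hTne : T.Nonempty := by
      rw [← Finset.card_pos, hTcard, hφq]; omega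
    obtain ⟨x0, hx0⟩ := hTne
    have hordx0 : orderOf x0 = q := (Finset.mem_filter.mp hx0).2
    have hT'card : (T.erase x0).card = Nat.totient q - 1 := by
      rw [Finset.card_erase_of_mem hx0, hTcard]
    have e := (T.erase x0).equivFinOfCardEq hT'card
    refine le_eigMult_of_family _ _ x0 (fun i => ((e.symm i : (T.erase x0)) : M))
      (Subtype.coe_injective.comp e.symm.injective) ?_ ?_
    · intro i
      exact Finset.ne_of_mem_erase (e.symm i).2
    · intro i
      have hmem := (e.symm i).2
      have hordsi : orderOf ((e.symm i : (T.erase x0)) : M) = q :=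
        (Finset.mem_filter.mp (Finset.mem_of_mem_erase hmem)).2
      have hne : x0 ≠ ((e.symm i : (T.erase x0)) : M) :=
        (Finset.ne_of_mem_erase hmem).symm
      refine Aalpha_twin G α ?_ (hdegq x0 hordx0) (hdegq _ hordsi) ?_
      · rw [hadj]
        exact ⟨hne, Or.inl (by rw [hordsi, hordx0])⟩
      · intro w hw1 hw2
        rw [hadj, hadj, hordx0, hordsi]
        exact ⟨fun ⟨_, h⟩ => ⟨hw2, h⟩, fun ⟨_, h⟩ => ⟨hw1, h⟩⟩

/-- eigenvalues of the power graph of the cyclic group of order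
`n = pq`, `p < q` primes. -/
theorem stmt_15 {α : ℝ} (hα : α ∈ Set.Icc (0 : ℝ) 1)
    (p q n : ℕ) (hp : p.Prime) (hq : q.Prime) (hpq : p < q) (hn : n = p * q) [NeZero n] :
    Nat.totient n ≤
      eigMult (Aalpha (powerGraph (Multiplicative (ZMod n))) α) (α * (n : ℝ) - 1) ∧
    Nat.totient p - 1 ≤
      eigMult (Aalpha (powerGraph (Multiplicative (ZMod n))) α)
        (α * ((Nat.totient n : ℝ) + (Nat.totient p : ℝ) + 1) - 1) ∧
    Nat.totient q - 1 ≤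
      eigMult (Aalpha (powerGraph (Multiplicative (ZMod n))) α)
        (α * ((Nat.totient n : ℝ) + (Nat.totient q : ℝ) + 1) - 1) :=
  pg_main (Multiplicative (ZMod n)) p q n hp hq hpq hn
    ((Fintype.card_multiplicative _).trans (ZMod.card n))
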